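/- Assume every candidate has unlimited capacity (m_i = ∞) and every vote type approves exactly one candidate, so we may write v_i for the initial number of votes of candidate i. Then any final allocation (n_i) produced by the Eneström–Phragmén procedure is a largest-remainders allocation with the Droop quota q = v/(n+1): writing t_i = ⌊v_i/q⌋ and r_i = v_i − t_i·q, either (a) Σ_i t_i ≤ n, n_i ≥ t_i for all i, and the n − Σ_i t_i candidates i with n_i = t_i + 1 have remainders r_i at least as large as the remainder of any candidate j with n_j = t_j; or (b) Σ_i t_i = n+1 (so all r_i = 0, every v_i is a multiple of q), and n_i = t_i for all i except one candidate j with v_j > 0 for which n_j = t_j − 1. -/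
import Mathlib


/-!
The Eneström–Phragmén procedure.

We fix a number of seats `n ≥ 1`, a finite set `ι` of candidates with capacities
`m i ∈ ℕ∞`, a finite set `κ` of vote types, and for each vote type a positive weight
`v k` and a nonempty approval set `A k`.  The total vote is `V = ∑ k, v k` and the
(Droop) quota is `q = V / (n + 1)`.  An execution of the procedure is recorded by the
vote weights `vk s k` at each step `s`, the seat counts `seats s i`, and the candidate
`winner s` receiving seat `s + 1` (for `s < n`), subject to the rules of the procedure.
-/

namespace EP

/-- The data of an Eneström–Phragmén election. -/
structure Input (ι κ : Type*) [Fintype ι] [DecidableEq ι] [Fintype κ] : Type _ where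
  /-- number of seats -/
  n : ℕ
  hn : 1 ≤ n
  /-- capacities of the candidates -/
  m : ι → ℕ∞
  /-- weights of the vote types -/
  v : κ → ℝ
  hv : ∀ k, 0 < v k
  /-- approval sets of the vote types -/
  A : κ → Finset ι
  hA : ∀ k, (A k).Nonempty

namespace Input

variable {ι κ : Type*} [Fintype ι] [DecidableEq ι] [Fintype κ] (P : Input ι κ)

/-- Total number of votes. -/
noncomputable def V : ℝ := ∑ k, P.v k

/-- The Droop quota `q = v / (n + 1)`. -/
noncomputable def q : ℝ := P.V / (P.n + 1)

/-- Support of candidate `i` given current vote weights `u`: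
`w_i = ∑_{k : i ∈ A_k} u_k`. -/
noncomputable def supp (u : κ → ℝ) (i : ι) : ℝ :=
  ∑ k ∈ Finset.univ.filter (fun k => i ∈ P.A k), u k

/-- Standing assumption: at least `n` candidates have positive initial support. -/
def enough : Prop := P.n ≤ {i : ι | 0 < P.supp P.v i}.ncard

end Input

/-- An execution of the Eneström–Phragmén procedure: at each step `s < n`,
seat `s + 1` is given to an eligible candidate `winner s` of maximal support, and the
votes approving the winner are reduced according to the quota rule. -/
structure Exec {ι κ : Type*} [Fintype ι] [DecidableEq ι] [Fintype κ]
    (P : Input ι κ) : Type _ where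
  /-- the vote weights `v_k[s]` -/
  vk : ℕ → κ → ℝ
  /-- the seat counts `n_i[s]` -/
  seats : ℕ → ι → ℕ
  /-- the candidate receiving seat `s + 1` -/
  winner : ℕ → ι
  vk_init : vk 0 = P.v
  seats_init : ∀ i, seats 0 i = 0
  /-- the winner is eligible -/
  winner_elig : ∀ s < P.n, (seats s (winner s) : ℕ∞) < P.m (winner s)
  /-- the winner maximizes the support among eligible candidates -/
  winner_max : ∀ s < P.n, ∀ i : ι, (seats s i : ℕ∞) < P.m i →
    P.supp (vk s) i ≤ P.supp (vk s) (winner s)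
  seats_succ : ∀ s < P.n, ∀ i : ι,
    seats (s + 1) i = if i = winner s then seats s i + 1 else seats s i
  /-- vote reduction when the winner has at least a quota -/
  vk_succ_ge : ∀ s < P.n, ∀ k, winner s ∈ P.A k → P.q ≤ P.supp (vk s) (winner s) →
    vk (s + 1) k = (1 - P.q / P.supp (vk s) (winner s)) * vk s k
  /-- vote exhaustion when the winner has less than a quota -/
  vk_succ_lt : ∀ s < P.n, ∀ k, winner s ∈ P.A k → P.supp (vk s) (winner s) < P.q →
    vk (s + 1) k = 0
  /-- votes not approving the winner are unchanged -/
  vk_succ_out : ∀ s < P.n, ∀ k, winner s ∉ P.A k → vk (s + 1) k = vk s k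

end EP

open EP in
/-- if every candidate has unlimited capacity and every vote type approves
exactly one candidate (so the initial vote of a candidate `i` is `P.supp P.v i`), then
any final allocation produced by the Eneström–Phragmén procedure is a largest-remainders
allocation with the Droop quota: with `t i = ⌊v_i / q⌋` and `r i = v_i - t i * q`, either
(a) `∑ t ≤ n`, every `i` gets at least `t i` seats, and the `n - ∑ t` candidates with
`n_i = t_i + 1` have remainders at least as large as that of any candidate with
`n_j = t_j`; or (b) `∑ t = n + 1` (so all remainders vanish) and every candidate gets
exactly `t i` seats except one candidate `j` with `v_j > 0`, who gets `t j - 1`. -/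
theorem enestrom_phragmen_uninominal_parties_largest_remainders
    {ι κ : Type*} [Fintype ι] [DecidableEq ι] [Fintype κ]
    (P : Input ι κ) (henough : P.enough)
    (hm : ∀ i, P.m i = ⊤) (hA1 : ∀ k, (P.A k).card = 1)
    (E : Exec P)
    (t : ι → ℕ) (ht : ∀ i, t i = ⌊P.supp P.v i / P.q⌋₊)
    (r : ι → ℝ) (hr : ∀ i, r i = P.supp P.v i - t i * P.q) :
    ((∑ i, t i) ≤ P.n ∧
      (∀ i, t i ≤ E.seats P.n i) ∧
      (Finset.univ.filter (fun i => E.seats P.n i = t i + 1)).card = P.n - ∑ i, t i ∧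
      (∀ i j : ι, E.seats P.n i = t i + 1 → E.seats P.n j = t j → r j ≤ r i))
    ∨ ((∑ i, t i) = P.n + 1 ∧
      (∀ i, r i = 0) ∧
      ∃ j : ι, 0 < P.supp P.v j ∧ E.seats P.n j + 1 = t j ∧
        ∀ i, i ≠ j → E.seats P.n i = t i) := by

  classical
  -- every approval set is a singleton
  choose a ha using fun k => Finset.card_eq_one.mp (hA1 k)
  have memA : ∀ k i, i ∈ P.A k ↔ a k = i := by
    intro k i; rw [ha k, Finset.mem_singleton, eq_comm]
  -- positivity of the quota
  have hv0 : ∀ i, 0 ≤ P.supp P.v i := by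
    intro i; rw [Input.supp]; exact Finset.sum_nonneg fun k _ => (P.hv k).le
  have hVpos : 0 < P.V := by
    have hcard : P.n ≤ {i : ι | 0 < P.supp P.v i}.ncard := henough
    have hne : {i : ι | 0 < P.supp P.v i}.Nonempty := by
      apply Set.nonempty_of_ncard_ne_zero
      have := P.hn; omega
    obtain ⟨i, hi⟩ := hne
    have hi : 0 < P.supp P.v i := hi
    calc (0:ℝ) < P.supp P.v i := hi
      _ ≤ P.V := by
          rw [Input.supp, Input.V]
          exact Finset.sum_le_sum_of_subset_of_nonneg (Finset.filter_subset _ _)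
            (fun k _ _ => (P.hv k).le)
  have hq : 0 < P.q := by
    have hn1 : (0:ℝ) < (P.n : ℝ) + 1 := by positivity
    exact div_pos hVpos hn1
  -- fiberwise decomposition of the total weight
  have hfib : ∀ u : κ → ℝ, ∑ i, P.supp u i = ∑ k, u k := by
    intro u
    have hfe : ∀ i, P.supp u i = ∑ k ∈ Finset.univ.filter fun k => a k = i, u k := by
      intro i
      rw [Input.supp]
      apply Finset.sum_congr _ fun _ _ => rfl
      ext k; simp [memA k i]
    simp_rw [hfe]
    exact Finset.sum_fiberwise Finset.univ a u
  have hVq : P.V = ((P.n : ℝ) + 1) * P.q := by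
    rw [Input.q]; field_simp
  have hsum0 : ∑ i, P.supp P.v i = ((P.n : ℝ) + 1) * P.q := by
    rw [hfib P.v, ← Input.V, hVq]
  -- floor estimates
  have htq : ∀ i, (t i : ℝ) * P.q ≤ P.supp P.v i := by
    intro i
    rw [ht i]
    have h1 : (⌊P.supp P.v i / P.q⌋₊ : ℝ) ≤ P.supp P.v i / P.q :=
      Nat.floor_le (div_nonneg (hv0 i) hq.le)
    calc (⌊P.supp P.v i / P.q⌋₊ : ℝ) * P.q ≤ (P.supp P.v i / P.q) * P.q :=
          mul_le_mul_of_nonneg_right h1 hq.le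
      _ = P.supp P.v i := div_mul_cancel₀ _ hq.ne'
  have hvlt : ∀ i, P.supp P.v i < ((t i : ℝ) + 1) * P.q := by
    intro i
    rw [ht i]
    have h1 : P.supp P.v i / P.q < ⌊P.supp P.v i / P.q⌋₊ + 1 := Nat.lt_floor_add_one _
    calc P.supp P.v i = (P.supp P.v i / P.q) * P.q := (div_mul_cancel₀ _ hq.ne').symm
      _ < ((⌊P.supp P.v i / P.q⌋₊ : ℝ) + 1) * P.q := mul_lt_mul_of_pos_right h1 hq
  have hr0 : ∀ i, 0 ≤ r i := fun i => by rw [hr i]; linarith [htq i]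
  have hrq : ∀ i, r i < P.q := fun i => by
    rw [hr i]; have := hvlt i; nlinarith
  -- eligibility is automatic
  have elig : ∀ s i, (E.seats s i : ℕ∞) < P.m i := fun s i => by
    rw [hm i]; exact lt_of_le_of_ne le_top (by simp)
  have wmax : ∀ s, s < P.n → ∀ i, P.supp (E.vk s) i ≤ P.supp (E.vk s) (E.winner s) :=
    fun s hs i => E.winner_max s hs i (elig s i)
  -- seat counts are monotone
  have mono' : ∀ d s, s + d ≤ P.n → ∀ i, E.seats s i ≤ E.seats (s + d) i := by
    intro d
    induction d with
    | zero => intro s _ i; exact le_rfl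
    | succ d ih =>
      intro s h i
      have h1 : E.seats s i ≤ E.seats (s + d) i := ih s (by omega) i
      have h2 := E.seats_succ (s + d) (by omega) i
      have h3 : s + (d + 1) = (s + d) + 1 := by omega
      rw [h3]
      split_ifs at h2 <;> omega
  have mono : ∀ s, s ≤ P.n → ∀ i, E.seats s i ≤ E.seats P.n i := by
    intro s hs i
    have := mono' (P.n - s) s (by omega) i
    rwa [Nat.add_sub_cancel' hs] at this
  -- total number of seats allocated after s steps is s
  have sum_seats : ∀ s, s ≤ P.n → ∑ i, E.seats s i = s := by
    intro s
    induction s with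
    | zero => intro _; simp [E.seats_init]
    | succ s ih =>
      intro hs
      have h1 : ∀ i, E.seats (s + 1) i = E.seats s i + if i = E.winner s then 1 else 0 := by
        intro i
        rw [E.seats_succ s (by omega) i]
        split_ifs <;> omega
      rw [Finset.sum_congr rfl fun i _ => h1 i, Finset.sum_add_distrib,
        Finset.sum_ite_eq' Finset.univ (E.winner s) (fun _ => 1),
        if_pos (Finset.mem_univ _), ih (by omega)]
  -- support of non-winners is unchanged
  have supp_out : ∀ s, s < P.n → ∀ i, i ≠ E.winner s →
      P.supp (E.vk (s + 1)) i = P.supp (E.vk s) i := by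
    intro s hs i hne
    rw [Input.supp, Input.supp]
    apply Finset.sum_congr rfl
    intro k hk
    rw [Finset.mem_filter] at hk
    apply E.vk_succ_out s hs k
    rw [memA]
    have h2 := (memA k i).mp hk.2
    intro h
    exact hne (by rw [← h2, h])
  -- support of the winner when it has at least a quota
  have supp_win_ge : ∀ s, s < P.n → P.q ≤ P.supp (E.vk s) (E.winner s) →
      P.supp (E.vk (s + 1)) (E.winner s) = P.supp (E.vk s) (E.winner s) - P.q := by
    intro s hs hge
    have hW : P.supp (E.vk s) (E.winner s) ≠ 0 := by linarith
    have h1 : P.supp (E.vk (s + 1)) (E.winner s)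
        = (1 - P.q / P.supp (E.vk s) (E.winner s)) * P.supp (E.vk s) (E.winner s) := by
      rw [Input.supp, Input.supp, Finset.mul_sum]
      apply Finset.sum_congr rfl
      intro k hk
      rw [Finset.mem_filter] at hk
      exact E.vk_succ_ge s hs k hk.2 hge
    rw [h1]; field_simp
  -- support of the winner when it has less than a quota
  have supp_win_lt : ∀ s, s < P.n → P.supp (E.vk s) (E.winner s) < P.q →
      P.supp (E.vk (s + 1)) (E.winner s) = 0 := by
    intro s hs hlt
    rw [Input.supp]
    apply Finset.sum_eq_zero
    intro k hk
    rw [Finset.mem_filter] at hk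
    exact E.vk_succ_lt s hs k hk.2 hlt
  -- the total weight decreases by at most a quota at each step
  have total_step : ∀ s, s < P.n →
      (∑ i, P.supp (E.vk s) i) - P.q ≤ ∑ i, P.supp (E.vk (s + 1)) i := by
    intro s hs
    by_cases hge : P.q ≤ P.supp (E.vk s) (E.winner s)
    · have hnew : ∑ i, P.supp (E.vk (s + 1)) i
          = ∑ i, (P.supp (E.vk s) i - if i = E.winner s then P.q else 0) := by
        apply Finset.sum_congr rfl
        intro i _
        by_cases hi : i = E.winner s
        · subst hi; rw [if_pos rfl, supp_win_ge s hs hge]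
        · rw [if_neg hi, supp_out s hs i hi, sub_zero]
      rw [hnew, Finset.sum_sub_distrib,
        Finset.sum_ite_eq' Finset.univ (E.winner s) (fun _ => P.q),
        if_pos (Finset.mem_univ _)]
    · push_neg at hge
      have hnew : ∑ i, P.supp (E.vk (s + 1)) i
          = ∑ i, (P.supp (E.vk s) i -
              if i = E.winner s then P.supp (E.vk s) (E.winner s) else 0) := by
        apply Finset.sum_congr rfl
        intro i _
        by_cases hi : i = E.winner s
        · subst hi; rw [if_pos rfl, supp_win_lt s hs hge, sub_self]
        · rw [if_neg hi, supp_out s hs i hi, sub_zero]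
      rw [hnew, Finset.sum_sub_distrib,
        Finset.sum_ite_eq' Finset.univ (E.winner s)
          (fun _ => P.supp (E.vk s) (E.winner s)),
        if_pos (Finset.mem_univ _)]
      linarith
  -- THE MAIN INVARIANT
  have key : ∀ s, s ≤ P.n →
      (((P.n : ℝ) + 1 - s) * P.q ≤ ∑ i, P.supp (E.vk s) i) ∧
      ∀ i, (E.seats s i ≤ t i ∧
              P.supp (E.vk s) i = P.supp P.v i - (E.seats s i : ℝ) * P.q)
          ∨ (E.seats s i = t i + 1 ∧ 0 < r i ∧ P.supp (E.vk s) i = 0) := by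
    intro s
    induction s with
    | zero =>
      intro _
      constructor
      · rw [E.vk_init, hsum0]
        apply le_of_eq; push_cast; ring
      · intro i
        left
        rw [E.seats_init, E.vk_init]
        refine ⟨Nat.zero_le _, by push_cast; ring⟩
    | succ s ih =>
      intro hs1
      have hs : s < P.n := hs1
      obtain ⟨ihT, ihI⟩ := ih hs.le
      have hWpos : 0 < P.supp (E.vk s) (E.winner s) := by
        by_contra h
        push_neg at h
        have hall : ∀ i, P.supp (E.vk s) i ≤ 0 := fun i => le_trans (wmax s hs i) h
        have hsle : ∑ i, P.supp (E.vk s) i ≤ 0 :=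
          Finset.sum_nonpos fun i _ => hall i
        have hpos : (0:ℝ) < ((P.n : ℝ) + 1 - s) * P.q := by
          apply mul_pos _ hq
          have : (s : ℝ) ≤ (P.n : ℝ) := by exact_mod_cast hs.le
          linarith
        linarith
      have hwstate : E.seats s (E.winner s) ≤ t (E.winner s) ∧
          P.supp (E.vk s) (E.winner s)
            = P.supp P.v (E.winner s) - (E.seats s (E.winner s) : ℝ) * P.q := by
        rcases ihI (E.winner s) with h | h
        · exact h
        · exact absurd h.2.2 hWpos.ne'
      constructor
      · have h1 := total_step s hs
        have h2 : ((P.n : ℝ) + 1 - ((s : ℕ) + 1 : ℕ)) * P.q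
            = ((P.n : ℝ) + 1 - s) * P.q - P.q := by push_cast; ring
        rw [h2]; linarith
      · intro i
        by_cases hiw : i = E.winner s
        · subst hiw
          by_cases hge : P.q ≤ P.supp (E.vk s) (E.winner s)
          · left
            have hseat : E.seats (s + 1) (E.winner s) = E.seats s (E.winner s) + 1 := by
              rw [E.seats_succ s hs (E.winner s), if_pos rfl]
            have hW := hwstate.2
            have h1 : (E.seats s (E.winner s) : ℝ) * P.q + P.q
                ≤ P.supp P.v (E.winner s) := by linarith
            constructor
            · rw [hseat, ht]
              apply Nat.le_floor
              rw [le_div_iff₀ hq]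
              push_cast
              linarith
            · rw [supp_win_ge s hs hge, hW, hseat]
              push_cast
              ring
          · push_neg at hge
            right
            have hW := hwstate.2
            have hc : E.seats s (E.winner s) = t (E.winner s) := by
              have h1 : P.supp P.v (E.winner s)
                  < (E.seats s (E.winner s) : ℝ) * P.q + P.q := by linarith
              have h2 : t (E.winner s) < E.seats s (E.winner s) + 1 := by
                rw [ht]
                apply (Nat.floor_lt (div_nonneg (hv0 (E.winner s)) hq.le)).2
                rw [div_lt_iff₀ hq]
                push_cast
                linarith
              have h3 := hwstate.1
              omega
            have hrw : r (E.winner s) = P.supp (E.vk s) (E.winner s) := by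
              rw [hr, hW, hc]
            refine ⟨?_, ?_, ?_⟩
            · rw [E.seats_succ s hs (E.winner s), if_pos rfl, hc]
            · rw [hrw]; exact hWpos
            · exact supp_win_lt s hs hge
        · have hseat : E.seats (s + 1) i = E.seats s i := by
            rw [E.seats_succ s hs i, if_neg hiw]
          rw [hseat, supp_out s hs i hiw]
          exact ihI i
  -- consequences of the invariant at the end
  have sum_final : ∑ i, E.seats P.n i = P.n := sum_seats P.n le_rfl
  obtain ⟨-, hinv⟩ := key P.n le_rfl
  have hle : ∀ i, E.seats P.n i ≤ t i + 1 := by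
    intro i; rcases hinv i with h | h
    · omega
    · omega
  -- the crossing step of a candidate receiving t i + 1 seats
  have cross : ∀ i, E.seats P.n i = t i + 1 →
      ∃ s1, s1 < P.n ∧ E.winner s1 = i ∧ P.supp (E.vk s1) i = r i ∧
        ∀ j, E.seats P.n j ≤ t j →
          P.supp P.v j - (E.seats P.n j : ℝ) * P.q ≤ P.supp (E.vk s1) j := by
    intro i hi
    have hex : ∃ s, t i < E.seats s i := ⟨P.n, by omega⟩
    have hspec : t i < E.seats (Nat.find hex) i := Nat.find_spec hex
    have hfle : Nat.find hex ≤ P.n := Nat.find_le (by omega)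
    have hfne : Nat.find hex ≠ 0 := by
      intro h
      rw [h, E.seats_init] at hspec
      omega
    obtain ⟨s1, heq⟩ : ∃ s1, Nat.find hex = s1 + 1 := ⟨Nat.find hex - 1, by omega⟩
    have hlt : s1 < P.n := by omega
    have hmin : ¬ t i < E.seats s1 i := Nat.find_min hex (by omega)
    have hsucc := E.seats_succ s1 hlt i
    have hwin : i = E.winner s1 := by
      by_contra h
      rw [if_neg h] at hsucc
      rw [heq, hsucc] at hspec
      exact hmin hspec
    rw [if_pos hwin] at hsucc
    have hspec' : t i < E.seats (s1 + 1) i := by rw [← heq]; exact hspec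
    have hseq : E.seats s1 i = t i := by omega
    obtain ⟨-, hinv1⟩ := key s1 hlt.le
    have hsupp_i : P.supp (E.vk s1) i = r i := by
      rcases hinv1 i with h | h
      · rw [h.2, hseq, hr]
      · omega
    refine ⟨s1, hlt, hwin.symm, hsupp_i, ?_⟩
    intro j hj
    have hmj : E.seats s1 j ≤ E.seats P.n j := mono s1 hlt.le j
    rcases hinv1 j with h | h
    · rw [h.2]
      have h2 : (E.seats s1 j : ℝ) * P.q ≤ (E.seats P.n j : ℝ) * P.q := by
        apply mul_le_mul_of_nonneg_right _ hq.le
        exact_mod_cast hmj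
      linarith
    · omega
  -- the dichotomy
  by_cases hexlt : ∃ j, E.seats P.n j < t j
  · -- case (b)
    right
    obtain ⟨j, hj⟩ := hexlt
    -- no candidate can have t i + 1 seats
    have hall : ∀ i, E.seats P.n i ≤ t i := by
      intro i
      by_contra h
      have hi : E.seats P.n i = t i + 1 := by have := hle i; omega
      obtain ⟨s1, hs1, hwin, hsi, hjb⟩ := cross i hi
      have h1 := hjb j hj.le
      have h2 := wmax s1 hs1 j
      rw [hwin, hsi] at h2
      have h3 : (E.seats P.n j : ℝ) * P.q + P.q ≤ (t j : ℝ) * P.q := by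
        have hcast : (E.seats P.n j : ℝ) + 1 ≤ (t j : ℝ) := by exact_mod_cast hj
        nlinarith
      have h4 := htq j
      have h5 := hrq i
      have h6 := hr0 j
      have h7 := hr j
      linarith
    have hSn : P.n + 1 ≤ ∑ i, t i := by
      have hlt2 : ∑ i, E.seats P.n i < ∑ i, t i :=
        Finset.sum_lt_sum (fun i _ => hall i) ⟨j, Finset.mem_univ j, hj⟩
      omega
    have hSle : ∑ i, t i ≤ P.n + 1 := by
      have h1 : (∑ i, (t i : ℝ)) * P.q ≤ ((P.n : ℝ) + 1) * P.q := by
        rw [← hsum0, Finset.sum_mul]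
        exact Finset.sum_le_sum fun i _ => htq i
      have h2 : (∑ i, (t i : ℝ)) ≤ (P.n : ℝ) + 1 := le_of_mul_le_mul_right h1 hq
      have h3 : ((∑ i, t i : ℕ) : ℝ) ≤ ((P.n + 1 : ℕ) : ℝ) := by push_cast; linarith
      exact_mod_cast h3
    have hS : ∑ i, t i = P.n + 1 := le_antisymm hSle hSn
    have hrzero : ∀ i, r i = 0 := by
      have hsumr : ∑ i, r i = 0 := by
        have h1 : ∑ i, r i = (∑ i, P.supp P.v i) - (∑ i, (t i : ℝ)) * P.q := by
          rw [Finset.sum_mul, ← Finset.sum_sub_distrib]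
          exact Finset.sum_congr rfl fun i _ => hr i
        have h2 : (∑ i, (t i : ℝ)) = (P.n : ℝ) + 1 := by
          have h0 : ((∑ i, t i : ℕ) : ℝ) = ((P.n + 1 : ℕ) : ℝ) := by exact_mod_cast hS
          push_cast at h0
          exact h0
        rw [h1, hsum0, h2]
        ring
      intro i
      exact (Finset.sum_eq_zero_iff_of_nonneg fun i _ => hr0 i).1 hsumr i (Finset.mem_univ i)
    have key2 : ∀ i, i ≠ j → E.seats P.n i = t i := by
      intro i hij
      by_contra h
      have hi' : E.seats P.n i + 1 ≤ t i := by have := hall i; omega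
      have hsub : ({i, j} : Finset ι) ⊆ Finset.univ := Finset.subset_univ _
      have e1 := Finset.sum_sdiff (f := E.seats P.n) hsub
      have e2 := Finset.sum_sdiff (f := t) hsub
      have h1 : ∑ x ∈ Finset.univ \ {i, j}, E.seats P.n x
          ≤ ∑ x ∈ Finset.univ \ {i, j}, t x :=
        Finset.sum_le_sum fun x _ => hall x
      have h2 : ∑ x ∈ ({i, j} : Finset ι), E.seats P.n x + 2
          ≤ ∑ x ∈ ({i, j} : Finset ι), t x := by
        rw [Finset.sum_pair hij, Finset.sum_pair hij]
        omega
      omega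
    have hj1 : E.seats P.n j + 1 = t j := by
      have e1 := Finset.add_sum_erase Finset.univ t (Finset.mem_univ j)
      have e2 := Finset.add_sum_erase Finset.univ (E.seats P.n) (Finset.mem_univ j)
      have e3 : ∑ x ∈ Finset.univ.erase j, t x
          = ∑ x ∈ Finset.univ.erase j, E.seats P.n x :=
        Finset.sum_congr rfl fun x hx => (key2 x (Finset.ne_of_mem_erase hx)).symm
      omega
    have hvj : 0 < P.supp P.v j := by
      have h1 : 1 ≤ t j := by omega
      have h2 : (1 : ℝ) * P.q ≤ (t j : ℝ) * P.q := by
        apply mul_le_mul_of_nonneg_right _ hq.le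
        exact_mod_cast h1
      have h3 := htq j
      linarith
    exact ⟨hS, hrzero, j, hvj, hj1, key2⟩
  · -- case (a)
    left
    push_neg at hexlt
    have hge : ∀ i, t i ≤ E.seats P.n i := hexlt
    have hS : ∑ i, t i ≤ P.n := by
      calc ∑ i, t i ≤ ∑ i, E.seats P.n i := Finset.sum_le_sum fun i _ => hge i
        _ = P.n := sum_final
    refine ⟨hS, hge, ?_, ?_⟩
    · have hsplit : ∀ i, E.seats P.n i
          = t i + (if E.seats P.n i = t i + 1 then 1 else 0) := by
        intro i
        have h1 := hle i
        have h2 := hge i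
        split_ifs with h <;> omega
      have h3 : ∑ i, E.seats P.n i
          = ∑ i, t i + (Finset.univ.filter fun i => E.seats P.n i = t i + 1).card := by
        rw [Finset.sum_congr rfl fun i _ => hsplit i, Finset.sum_add_distrib,
          Finset.card_filter]
      omega
    · intro i j hi hj
      obtain ⟨s1, hs1, hwin, hsi, hjb⟩ := cross i hi
      have h1 := hjb j (by omega)
      have h2 := wmax s1 hs1 j
      rw [hwin, hsi] at h2
      rw [hj] at h1
      rw [hr j, hr i] at *
      linarith
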